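/- Let (G,i,π) be an extension of K by Q with outer action θ. Then the map sending λ ∈ Z^1(Q,Z(K)) to the map G → G, g ↦ i(λ(π(g)))·g, is a well-defined group isomorphism from Z^1(Q,Z(K)) onto Aut(KGQ) := { ξ ∈ Aut(G) : ξ∘i = i and π∘ξ = π }; its inverse sends ξ to the unique λ with i(λ(q)) = ξ(s(q))·s(q)⁻¹ for all q, for any section s : Q → G of π with s(1) = 1. In particular Aut(KGQ) is an abelian subgroup of Aut(G) which, via this canonical isomorphism, depends only on the extension problem (K,Q,θ) and not on the extension (G,i,π). -/

import Mathlib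

namespace IES

section OutDef

variable (K : Type*) [Group K]

/-- The subgroup of inner automorphisms of `K` inside `MulAut K`. -/
def Inn : Subgroup (MulAut K) := (MulAut.conj : K →* MulAut K).range

instance : (Inn K).Normal := by
  constructor
  rintro x ⟨k, rfl⟩ η
  refine ⟨η k, ?_⟩
  ext y
  simp [MulAut.conj_apply, MulAut.mul_apply, map_mul, map_inv]

/-- The outer automorphism group `Out K := Aut K / Inn K`. -/
abbrev Out := MulAut K ⧸ Inn K

/-- Canonical projection `Aut K → Out K`. -/
def toOut : MulAut K →* Out K := QuotientGroup.mk' (Inn K)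

lemma center_map (η : K ≃* K) {z : K} (hz : z ∈ Subgroup.center K) :
    η z ∈ Subgroup.center K := by
  rw [Subgroup.mem_center_iff] at hz ⊢
  intro g
  calc g * η z = η (η.symm g * z) := by rw [map_mul, η.apply_symm_apply]
    _ = η (z * η.symm g) := by rw [hz (η.symm g)]
    _ = η z * g := by rw [map_mul, η.apply_symm_apply]

/-- Restriction of automorphisms of `K` to its center. -/
def centerAut : MulAut K →* MulAut (Subgroup.center K) where
  toFun η :=
    { toFun := fun z => ⟨η z.1, center_map K η z.2⟩
      invFun := fun z => ⟨η.symm z.1, center_map K η.symm z.2⟩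
      left_inv := fun z => Subtype.ext (η.symm_apply_apply z.1)
      right_inv := fun z => Subtype.ext (η.apply_symm_apply z.1)
      map_mul' := fun a b => Subtype.ext (map_mul η a.1 b.1) }
  map_one' := by ext z; rfl
  map_mul' := fun a b => by ext z; rfl

lemma centerAut_inn : ∀ x ∈ Inn K, centerAut K x = 1 := by
  rintro x ⟨k, rfl⟩
  ext z
  have hz := z.2
  rw [Subgroup.mem_center_iff] at hz
  show k * z.1 * k⁻¹ = z.1
  rw [hz k, mul_inv_cancel_right]

/-- The action of `Out K` on the center of `K`. -/
def outCenter : Out K →* MulAut (Subgroup.center K) :=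
  QuotientGroup.lift (Inn K) (centerAut K) (centerAut_inn K)

end OutDef

section ModK

variable {K N : Type*} [Group K] [Group N]

/-- The group of automorphisms of `N` stabilizing the image of `K`. -/
def autK (i0 : K →* N) : Subgroup (MulAut N) where
  carrier := {η | ∀ n, η n ∈ i0.range ↔ n ∈ i0.range}
  one_mem' := by intro n; rw [MulAut.one_apply]
  mul_mem' := by
    intro a b ha hb n
    rw [MulAut.mul_apply]
    exact (ha (b n)).trans (hb n)
  inv_mem' := by
    intro a ha n
    have h := ha (a⁻¹ n)
    rw [MulAut.apply_inv_self] at h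
    exact h.symm

lemma mem_autK_iff {i0 : K →* N} {η : MulAut N} :
    η ∈ autK i0 ↔ ∀ n, η n ∈ i0.range ↔ n ∈ i0.range := Iff.rfl

/-- The subgroup of `autK i0` of inner automorphisms induced by elements of `i0 K`. -/
def cInn (i0 : K →* N) : Subgroup (autK i0) where
  carrier := {η | ∃ k : K, (η : MulAut N) = MulAut.conj (i0 k)}
  one_mem' := ⟨1, by simp⟩
  mul_mem' := by
    rintro a b ⟨k1, h1⟩ ⟨k2, h2⟩
    exact ⟨k1 * k2, by rw [Subgroup.coe_mul, h1, h2, ← map_mul, ← map_mul]⟩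
  inv_mem' := by
    rintro a ⟨k, h⟩
    exact ⟨k⁻¹, by rw [Subgroup.coe_inv, h, ← map_inv, ← map_inv]⟩

lemma conj_conj_eq (η : MulAut N) (x : N) :
    η * MulAut.conj x * η⁻¹ = MulAut.conj (η x) := by
  ext y
  simp [MulAut.conj_apply, MulAut.mul_apply, map_mul, map_inv]

instance (i0 : K →* N) : (cInn i0).Normal := by
  constructor
  rintro c ⟨k, hk⟩ g
  obtain ⟨k', hk'⟩ := (g.2 (i0 k)).mpr ⟨k, rfl⟩
  refine ⟨k', ?_⟩
  rw [Subgroup.coe_mul, Subgroup.coe_mul, Subgroup.coe_inv, hk, conj_conj_eq, hk']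

/-- The mod-`K` outer automorphism group `Out(N;K)`. -/
abbrev OutNK (i0 : K →* N) := ↥(autK i0) ⧸ cInn i0

/-- Canonical projection onto the mod-`K` outer automorphism group. -/
def mkNK (i0 : K →* N) : ↥(autK i0) →* OutNK i0 := QuotientGroup.mk' (cInn i0)

end ModK


section Cocycles

variable {K P Q R : Type*} [Group K] [Group P] [Group Q] [Group R]

/-- Normalized 1-cocycles of `Q` with values in `Z(K)`, for the action induced by `θ`. -/
def IsZ1Q (θ : Q →* Out K) (lam : Q → ↥(Subgroup.center K)) : Prop :=
  lam 1 = 1 ∧ ∀ q1 q2 : Q, lam (q1 * q2) = lam q1 * outCenter K (θ q1) (lam q2)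

/-- Normalized 1-cocycles of `P` with values in `Z(K)`, for the action induced by `θ ∘ j̄`. -/
def IsZ1P (θ : Q →* Out K) (jb : P →* Q) (lam : P → ↥(Subgroup.center K)) : Prop :=
  lam 1 = 1 ∧ ∀ p1 p2 : P, lam (p1 * p2) = lam p1 * outCenter K (θ (jb p1)) (lam p2)

/-- Normalized 1-cocycles of `R` with values in `Z(K)^P`, where the action `θ₀` of `R`
is expressed via arbitrary `φ̄`-preimages in `Q`. -/
def IsZ1R (θ : Q →* Out K) (jb : P →* Q) (fb : Q →* R)
    (lam : R → ↥(Subgroup.center K)) : Prop :=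
  lam 1 = 1 ∧
  (∀ (r : R) (p : P), outCenter K (θ (jb p)) (lam r) = lam r) ∧
  ∀ q1 q2 : Q, lam (fb q1 * fb q2) = lam (fb q1) * outCenter K (θ q1) (lam (fb q2))

/-- Normalized 2-cocycles of `R` with values in `Z(K)^P`. -/
def IsZ2R (θ : Q →* Out K) (jb : P →* Q) (fb : Q →* R)
    (d : R → R → ↥(Subgroup.center K)) : Prop :=
  (∀ r : R, d 1 r = 1 ∧ d r 1 = 1) ∧
  (∀ (r1 r2 : R) (p : P), outCenter K (θ (jb p)) (d r1 r2) = d r1 r2) ∧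
  ∀ (q1 : Q) (r2 r3 : R),
    d (fb q1) r2 * d (fb q1 * r2) r3 = outCenter K (θ q1) (d r2 r3) * d (fb q1) (r2 * r3)

/-- The cohomology class of a 1-cocycle of `P` is fixed by the `R`-action. -/
def RFixed (θ : Q →* Out K) (jb : P →* Q) (lam : P → ↥(Subgroup.center K)) : Prop :=
  ∀ q : Q, ∃ z0 : ↥(Subgroup.center K), ∀ p p' : P,
    jb p' = q⁻¹ * jb p * q →
      outCenter K (θ q) (lam p') = z0⁻¹ * outCenter K (θ (jb p)) z0 * lam p

end Cocycles

section AuxS3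

variable {K Q G : Type*} [Group K] [Group Q] [Group G]

lemma pi_i_eq_one (i : K →* G) (π : G →* Q) (hker : i.range = π.ker) (k : K) :
    π (i k) = 1 := by
  have : i k ∈ π.ker := hker ▸ ⟨k, rfl⟩
  exact this

lemma conj_mem (i : K →* G) (π : G →* Q) (hker : i.range = π.ker)
    (g : G) (k : K) : ∃ k', i k' = g * i k * g⁻¹ := by
  have : g * i k * g⁻¹ ∈ i.range := by
    rw [hker]
    simp [MonoidHom.mem_ker, pi_i_eq_one i π hker]
  exact this

lemma key_conj (i : K →* G) (π : G →* Q) (θ : Q →* Out K)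
    (hi : Function.Injective i) (hker : i.range = π.ker)
    (hθ : ∀ (g : G) (κ : MulAut K),
      (∀ k, i (κ k) = g * i k * g⁻¹) → θ (π g) = toOut K κ)
    (g : G) (z : ↥(Subgroup.center K)) :
    i (outCenter K (θ (π g)) z : K) = g * i (z : K) * g⁻¹ := by
  choose f hf using conj_mem i π hker g
  choose f' hf' using conj_mem i π hker g⁻¹
  let κ : MulAut K :=
    { toFun := f
      invFun := f'
      left_inv := by
        intro k
        apply hi
        rw [hf', hf]
        group
      right_inv := by
        intro k
        apply hi
        rw [hf, hf']
        group
      map_mul' := by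
        intro k1 k2
        apply hi
        rw [map_mul, hf, hf, hf, map_mul]
        group }
  have hκ : ∀ k, κ k = f k := fun _ => rfl
  have hθκ : θ (π g) = toOut K κ := hθ g κ (fun k => by rw [hκ]; exact hf k)
  have houter : outCenter K (θ (π g)) = centerAut K κ := by
    rw [hθκ]
    rfl
  rw [houter]
  show i (κ (z : K)) = g * i (z : K) * g⁻¹
  rw [hκ]
  exact hf _

end AuxS3

/-- For an extension `(G,i,π)` of `K` by `Q` with outer action `θ`,
the map `λ ↦ (g ↦ i(λ(π g))·g)` is a well-defined group isomorphism
`Z¹(Q,Z(K)) ≃ Aut(KGQ)`, with inverse `ξ ↦ (q ↦ ξ(s q)·(s q)⁻¹)` for any section `s`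
of `π`; in particular `Aut(KGQ)` is abelian. -/
theorem statement3
    {K Q G : Type*} [Group K] [Group Q] [Group G]
    (i : K →* G) (π : G →* Q) (θ : Q →* Out K)
    (hi : Function.Injective i) (hπ : Function.Surjective π)
    (hker : i.range = π.ker)
    (hθ : ∀ (g : G) (κ : MulAut K),
      (∀ k, i (κ k) = g * i k * g⁻¹) → θ (π g) = toOut K κ) :
    -- well-definedness: each cocycle gives an automorphism of the extension
    (∀ lam : Q → ↥(Subgroup.center K), IsZ1Q θ lam →
      ∃ ξ : MulAut G, (∀ g : G, ξ g = i (lam (π g) : K) * g) ∧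
        (∀ k, ξ (i k) = i k) ∧ (∀ g, π (ξ g) = π g)) ∧
    -- injectivity
    (∀ lam1 lam2 : Q → ↥(Subgroup.center K), IsZ1Q θ lam1 → IsZ1Q θ lam2 →
      (∀ g : G, i (lam1 (π g) : K) * g = i (lam2 (π g) : K) * g) → lam1 = lam2) ∧
    -- the map is a homomorphism
    (∀ lam1 lam2 : Q → ↥(Subgroup.center K), IsZ1Q θ lam1 → IsZ1Q θ lam2 →
      IsZ1Q θ (fun q => lam1 q * lam2 q) ∧
      ∀ g : G, i ((fun q => lam1 q * lam2 q) (π g) : K) * g =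
        i (lam1 (π (i (lam2 (π g) : K) * g)) : K) * (i (lam2 (π g) : K) * g)) ∧
    -- surjectivity onto Aut(KGQ)
    (∀ ξ : MulAut G, (∀ k, ξ (i k) = i k) → (∀ g, π (ξ g) = π g) →
      ∃ lam : Q → ↥(Subgroup.center K), IsZ1Q θ lam ∧
        ∀ g : G, ξ g = i (lam (π g) : K) * g) ∧
    -- inverse formula, via any section s of π with s 1 = 1
    (∀ s : Q → G, (∀ q, π (s q) = q) → s 1 = 1 →
      ∀ (ξ : MulAut G) (lam : Q → ↥(Subgroup.center K)), IsZ1Q θ lam →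
        (∀ g : G, ξ g = i (lam (π g) : K) * g) →
        ∀ q : Q, (i (lam q : K) : G) = ξ (s q) * (s q)⁻¹) ∧
    -- Aut(KGQ) is abelian
    (∀ ξ1 ξ2 : MulAut G, (∀ k, ξ1 (i k) = i k) → (∀ g, π (ξ1 g) = π g) →
      (∀ k, ξ2 (i k) = i k) → (∀ g, π (ξ2 g) = π g) → ξ1 * ξ2 = ξ2 * ξ1) := by
  have hik : ∀ k : K, π (i k) = 1 := pi_i_eq_one i π hker
  have hkey := key_conj i π θ hi hker hθ
  -- Part 1: well-definedness
  have part1 : ∀ lam : Q → ↥(Subgroup.center K), IsZ1Q θ lam →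
      ∃ ξ : MulAut G, (∀ g : G, ξ g = i (lam (π g) : K) * g) ∧
        (∀ k, ξ (i k) = i k) ∧ (∀ g, π (ξ g) = π g) := by
    rintro lam ⟨hl1, hlc⟩
    have hπfix : ∀ g : G, π ((i (lam (π g) : K) : G) * g) = π g := by
      intro g
      rw [map_mul, hik, one_mul]
    refine ⟨{ toFun := fun g => i (lam (π g) : K) * g
              invFun := fun g => (i (lam (π g) : K) : G)⁻¹ * g
              left_inv := ?_
              right_inv := ?_
              map_mul' := ?_ }, fun g => rfl, ?_, ?_⟩
    · intro g
      show (i (lam (π (i (lam (π g) : K) * g)) : K) : G)⁻¹ * (i (lam (π g) : K) * g) = g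
      rw [hπfix, inv_mul_cancel_left]
    · intro g
      show (i (lam (π ((i (lam (π g) : K) : G)⁻¹ * g)) : K) : G) * ((i (lam (π g) : K) : G)⁻¹ * g) = g
      have : π ((i (lam (π g) : K) : G)⁻¹ * g) = π g := by
        rw [map_mul, map_inv, hik, inv_one, one_mul]
      rw [this, mul_inv_cancel_left]
    · intro g1 g2
      show i (lam (π (g1 * g2)) : K) * (g1 * g2) =
        (i (lam (π g1) : K) * g1) * (i (lam (π g2) : K) * g2)
      rw [map_mul π, hlc, Subgroup.coe_mul, map_mul i, hkey g1 (lam (π g2))]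
      group
    · intro k
      show i (lam (π (i k)) : K) * i k = i k
      rw [hik, hl1, OneMemClass.coe_one, map_one, one_mul]
    · intro g
      exact hπfix g
  -- Part 2: injectivity
  have part2 : ∀ lam1 lam2 : Q → ↥(Subgroup.center K), IsZ1Q θ lam1 → IsZ1Q θ lam2 →
      (∀ g : G, i (lam1 (π g) : K) * g = i (lam2 (π g) : K) * g) → lam1 = lam2 := by
    intro lam1 lam2 _ _ h
    funext q
    obtain ⟨g, rfl⟩ := hπ q
    exact Subtype.ext (hi (mul_right_cancel (h g)))
  -- Part 3: homomorphism
  have part3 : ∀ lam1 lam2 : Q → ↥(Subgroup.center K), IsZ1Q θ lam1 → IsZ1Q θ lam2 →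
      IsZ1Q θ (fun q => lam1 q * lam2 q) ∧
      ∀ g : G, i ((fun q => lam1 q * lam2 q) (π g) : K) * g =
        i (lam1 (π (i (lam2 (π g) : K) * g)) : K) * (i (lam2 (π g) : K) * g) := by
    rintro lam1 lam2 ⟨h11, h1c⟩ ⟨h21, h2c⟩
    refine ⟨⟨by simp [h11, h21], ?_⟩, ?_⟩
    · intro q1 q2
      simp only [h1c, h2c, map_mul]
      letI : CommGroup ↥(Subgroup.center K) := { (inferInstance : Group ↥(Subgroup.center K)) with mul_comm := fun a b => Subtype.ext (Subgroup.mem_center_iff.mp b.2 a) }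
      exact mul_mul_mul_comm _ _ _ _
    · intro g
      have : π ((i (lam2 (π g) : K) : G) * g) = π g := by
        rw [map_mul, hik, one_mul]
      rw [this, Subgroup.coe_mul, map_mul, mul_assoc]
  -- Part 4: surjectivity
  have part4 : ∀ ξ : MulAut G, (∀ k, ξ (i k) = i k) → (∀ g, π (ξ g) = π g) →
      ∃ lam : Q → ↥(Subgroup.center K), IsZ1Q θ lam ∧
        ∀ g : G, ξ g = i (lam (π g) : K) * g := by
    intro ξ hξi hξπ
    choose sec hsec using hπ
    have hmem : ∀ q : Q, ∃ k, i k = ξ (sec q) * (sec q)⁻¹ := by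
      intro q
      have : ξ (sec q) * (sec q)⁻¹ ∈ π.ker := by
        simp [MonoidHom.mem_ker, map_mul, hξπ]
      rw [← hker] at this
      exact this
    choose f hf using hmem
    have hrep : ∀ g : G, i (f (π g)) = ξ g * g⁻¹ := by
      intro g
      have h1 : π (sec (π g)) = π g := hsec _
      have hr : (sec (π g))⁻¹ * g ∈ i.range := by
        rw [hker]
        simp [MonoidHom.mem_ker, h1]
      obtain ⟨k, hk⟩ := hr
      have hg : g = sec (π g) * i k := by rw [hk, mul_inv_cancel_left]
      rw [hf]
      conv_rhs => rw [hg]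
      rw [map_mul, hξi, mul_inv_rev]
      group
    have hform : ∀ g : G, ξ g = i (f (π g)) * g := by
      intro g
      rw [hrep]
      group
    have hcen : ∀ q, f q ∈ Subgroup.center K := by
      intro q
      rw [Subgroup.mem_center_iff]
      intro k
      apply hi
      rw [map_mul, map_mul, hf]
      set s := sec q
      obtain ⟨k', hk'⟩ := conj_mem i π hker s⁻¹ k
      rw [inv_inv] at hk'
      have h2 : ξ (i k') = i k' := hξi k'
      rw [hk'] at h2
      simp only [map_mul, map_inv, hξi] at h2
      calc i k * (ξ s * s⁻¹) = ξ s * ((ξ s)⁻¹ * i k * ξ s) * s⁻¹ := by group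
        _ = ξ s * (s⁻¹ * i k * s) * s⁻¹ := by rw [h2]
        _ = (ξ s * s⁻¹) * i k := by group
    refine ⟨fun q => ⟨f q, hcen q⟩, ⟨?_, ?_⟩, fun g => hform g⟩
    · refine Subtype.ext (hi ?_)
      have h1 := hrep (1 : G)
      rw [map_one, map_one, inv_one, mul_one] at h1
      rw [h1, OneMemClass.coe_one, map_one]
    · intro q1 q2
      refine Subtype.ext (hi ?_)
      show i (f (q1 * q2)) =
        i ((⟨f q1, hcen q1⟩ : ↥(Subgroup.center K)) *
          outCenter K (θ q1) ⟨f q2, hcen q2⟩ : K)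
      rw [map_mul]
      have hk2 := hkey (sec q1) ⟨f q2, hcen q2⟩
      rw [hsec] at hk2
      have h12 : π (sec q1 * sec q2) = q1 * q2 := by rw [map_mul, hsec, hsec]
      have e := hrep (sec q1 * sec q2)
      rw [h12] at e
      have e1 : ξ (sec q1) = i (f q1) * sec q1 := by rw [hform, hsec]
      have e2 : ξ (sec q2) = i (f q2) * sec q2 := by rw [hform, hsec]
      rw [map_mul, e1, e2, mul_inv_rev] at e
      rw [e, hk2]
      group
  -- Part 5: inverse formula
  have part5 : ∀ s : Q → G, (∀ q, π (s q) = q) → s 1 = 1 →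
      ∀ (ξ : MulAut G) (lam : Q → ↥(Subgroup.center K)), IsZ1Q θ lam →
        (∀ g : G, ξ g = i (lam (π g) : K) * g) →
        ∀ q : Q, (i (lam q : K) : G) = ξ (s q) * (s q)⁻¹ := by
    intro s hs _ ξ lam _ hform q
    rw [hform (s q), hs]
    group
  -- Part 6: abelian
  have part6 : ∀ ξ1 ξ2 : MulAut G, (∀ k, ξ1 (i k) = i k) → (∀ g, π (ξ1 g) = π g) →
      (∀ k, ξ2 (i k) = i k) → (∀ g, π (ξ2 g) = π g) → ξ1 * ξ2 = ξ2 * ξ1 := by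
    intro ξ1 ξ2 h1i h1π h2i h2π
    obtain ⟨l1, _, hf1⟩ := part4 ξ1 h1i h1π
    obtain ⟨l2, _, hf2⟩ := part4 ξ2 h2i h2π
    ext g
    show ξ1 (ξ2 g) = ξ2 (ξ1 g)
    have hπ2 : π (ξ2 g) = π g := h2π g
    have hπ1 : π (ξ1 g) = π g := h1π g
    rw [hf1 (ξ2 g), hπ2, hf2 g, hf2 (ξ1 g), hπ1, hf1 g]
    have hcomm : (l1 (π g) : K) * (l2 (π g) : K) = (l2 (π g) : K) * (l1 (π g) : K) :=
      Subgroup.mem_center_iff.mp (l2 (π g)).2 (l1 (π g) : K)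
    rw [← mul_assoc, ← map_mul, hcomm, map_mul, mul_assoc]
  exact ⟨part1, part2, part3, part4, part5, part6⟩

end IES
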